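/- For every natural number k, the Stern polynomials satisfy 2·∑_{i=1}^{2^k} B_i(t) = (t+2)^k + t^k as an identity in ℤ[t]. -/

import Mathlib

open Polynomial

/-- The Stern polynomials: `B 0 = 0`, `B 1 = 1`, `B (2n) = t * B n`,
`B (2n+1) = B n + B (n+1)`. -/
noncomputable def stern : ℕ → Polynomial ℤ
  | 0 => 0
  | 1 => 1
  | n + 2 =>
    if _h : n % 2 = 0 then
      X * stern (n / 2 + 1)
    else
      stern (n / 2 + 1) + stern (n / 2 + 2)
  decreasing_by all_goals omega

lemma stern_even (n : ℕ) : stern (2 * n) = X * stern n := by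
  match n with
  | 0 => simp [stern]
  | m + 1 =>
    have h : 2 * (m + 1) = 2 * m + 2 := by ring
    rw [h, stern]
    simp [Nat.mul_mod_right, Nat.mul_div_cancel_left]

lemma stern_odd (n : ℕ) : stern (2 * n + 1) = stern n + stern (n + 1) := by
  match n with
  | 0 => simp [stern]
  | m + 1 =>
    have h : 2 * (m + 1) + 1 = (2 * m + 1) + 2 := by ring
    rw [h, stern]
    have h1 : (2 * m + 1) % 2 = 1 := by omega
    have h2 : (2 * m + 1) / 2 = m := by omega
    simp [h1, h2]

lemma stern_pow (k : ℕ) : stern (2 ^ k) = X ^ k := by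
  induction k with
  | zero => simp [stern]
  | succ k ih =>
    rw [pow_succ, mul_comm, stern_even, ih, pow_succ, mul_comm]

/-- partial sums -/
noncomputable def A (n : ℕ) : Polynomial ℤ := ∑ i ∈ Finset.range n, stern i

lemma A_double (n : ℕ) : A (2 * n) = (X + 1) * A n + A (n + 1) := by
  induction n with
  | zero => simp [A, stern]
  | succ n ih =>
    have h : 2 * (n + 1) = (2 * n + 1) + 1 := by ring
    rw [h, A, Finset.sum_range_succ, Finset.sum_range_succ, ← A, ih,
      stern_even, stern_odd]
    simp only [A, Finset.sum_range_succ]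
    ring

lemma two_A_pow (k : ℕ) : 2 * A (2 ^ k) = (X + 2) ^ k - X ^ k := by
  induction k with
  | zero => simp [A, stern]
  | succ k ih =>
    have h : (2 : ℕ) ^ (k + 1) = 2 * 2 ^ k := by ring
    have hA1 : A (2 ^ k + 1) = A (2 ^ k) + X ^ k := by
      rw [A, Finset.sum_range_succ, stern_pow, A]
    rw [h, A_double, hA1]
    ring_nf
    ring_nf at ih
    linear_combination (X + 2) * ih

theorem stern_sum_rows (k : ℕ) :
    2 * ∑ i ∈ Finset.Icc 1 (2 ^ k), stern i = (X + 2) ^ k + X ^ k := by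
  have h : ∑ i ∈ Finset.Icc 1 (2 ^ k), stern i = A (2 ^ k + 1) := by
    rw [A, Finset.sum_range_succ', ← Finset.Ico_add_one_right_eq_Icc, Finset.sum_Ico_eq_sum_range]
    simp [stern, add_comm]
  have hA1 : A (2 ^ k + 1) = A (2 ^ k) + X ^ k := by
    rw [A, Finset.sum_range_succ, stern_pow, A]
  rw [h, hA1]
  have := two_A_pow k
  linear_combination this
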